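/- Fix δ ∈ (0,1), n ∈ ℕ⁺, C > 0. Suppose that for every ψ ∈ Y the detectability inequality ‖φ_n(0;ψ)‖ ≤ δ‖ψ‖ + C‖B(·)*φ_n(·;ψ)‖_{L²(0,nT;U)} holds. Then for every z ∈ Y there exists a control u_z ∈ L²(0,nT;U) with ‖y(nT;0,z,u_z)‖ ≤ δ‖z‖ and ‖u_z‖_{L²(0,nT;U)} ≤ C‖z‖. -/

import Mathlib

open MeasureTheory Real Filter
open scoped RealInnerProductSpace

/-- conversely, if the detectability inequality
`‖φ_n(0;ψ)‖ ≤ δ‖ψ‖ + C‖B(·)*φ_n(·;ψ)‖` holds for all `ψ`, then every `z` can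
be steered with `‖y(nT;0,z,u_z)‖ ≤ δ‖z‖` and `‖u_z‖ ≤ C‖z‖`.  Here `𝒰` plays
the role of `L²(0,nT;U)`, `yEnd z u = y(nT;0,z,u)`, `φ0 ψ = φ_n(0;ψ)` and
`W ψ = B(·)*φ_n(·;ψ)` (both linear in the terminal datum `ψ`), and the
duality identity is the standard one. -/
theorem steering_of_detectability
    {Y 𝒰 : Type*} [NormedAddCommGroup Y] [InnerProductSpace ℝ Y] [CompleteSpace Y]
    [NormedAddCommGroup 𝒰] [InnerProductSpace ℝ 𝒰] [CompleteSpace 𝒰]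
    (δ C : ℝ) (hδ : δ ∈ Set.Ioo (0:ℝ) 1) (hC : 0 < C)
    (yEnd : Y → 𝒰 → Y) (φ0 : Y →ₗ[ℝ] Y) (W : Y →ₗ[ℝ] 𝒰)
    (hdual : ∀ (z : Y) (u : 𝒰) (ψ : Y),
      ⟪yEnd z u, ψ⟫ - ⟪z, φ0 ψ⟫ = ⟪u, W ψ⟫)
    (hdet : ∀ ψ : Y, ‖φ0 ψ‖ ≤ δ * ‖ψ‖ + C * ‖W ψ‖) :
    ∀ z : Y, ∃ u : 𝒰, ‖yEnd z u‖ ≤ δ * ‖z‖ ∧ ‖u‖ ≤ C * ‖z‖ := by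
  intro z
  -- the embedding ψ ↦ (ψ, W ψ)
  set Φ : Y →ₗ[ℝ] Y × 𝒰 := LinearMap.prod LinearMap.id W with hΦ
  set G : Submodule ℝ (Y × 𝒰) := LinearMap.range Φ with hG
  -- the functional on G
  set F : G →ₗ[ℝ] ℝ :=
    (((innerSL ℝ z).toLinearMap.comp φ0).comp
      ((LinearMap.fst ℝ Y 𝒰).comp G.subtype)) with hF
  -- the sublinear bound
  set N : Y × 𝒰 → ℝ := fun p => δ * ‖z‖ * ‖p.1‖ + C * ‖z‖ * ‖p.2‖ with hN
  have N_hom : ∀ c : ℝ, 0 < c → ∀ x, N (c • x) = c * N x := by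
    intro c hc x
    simp [hN, norm_smul, abs_of_pos hc]
    ring
  have N_add : ∀ x y, N (x + y) ≤ N x + N y := by
    intro x y
    have h1 : ‖x.1 + y.1‖ ≤ ‖x.1‖ + ‖y.1‖ := norm_add_le _ _
    have h2 : ‖x.2 + y.2‖ ≤ ‖x.2‖ + ‖y.2‖ := norm_add_le _ _
    have hδz : 0 ≤ δ * ‖z‖ := mul_nonneg hδ.1.le (norm_nonneg _)
    have hCz : 0 ≤ C * ‖z‖ := mul_nonneg hC.le (norm_nonneg _)
    simp only [hN, Prod.fst_add, Prod.snd_add]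
    nlinarith [mul_le_mul_of_nonneg_left h1 hδz, mul_le_mul_of_nonneg_left h2 hCz]
  have hf : ∀ x : G, F x ≤ N x := by
    rintro ⟨x, hx⟩
    obtain ⟨ψ, rfl⟩ := hx
    have : F ⟨Φ ψ, ⟨ψ, rfl⟩⟩ = ⟪z, φ0 ψ⟫ := rfl
    rw [this]
    have h1 : ⟪z, φ0 ψ⟫ ≤ ‖z‖ * ‖φ0 ψ‖ := real_inner_le_norm _ _
    have h2 : ‖z‖ * ‖φ0 ψ‖ ≤ ‖z‖ * (δ * ‖ψ‖ + C * ‖W ψ‖) :=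
      mul_le_mul_of_nonneg_left (hdet ψ) (norm_nonneg _)
    have h3 : N (Φ ψ) = δ * ‖z‖ * ‖ψ‖ + C * ‖z‖ * ‖W ψ‖ := rfl
    rw [h3]; nlinarith
  obtain ⟨g, hg_eq, hg_le⟩ :=
    exists_extension_of_le_sublinear ⟨G, F⟩ N N_hom N_add hf
  -- bounds for the components of g
  have habs : ∀ p : Y × 𝒰, |g p| ≤ N p := by
    intro p
    rcases abs_cases (g p) with ⟨h, _⟩ | ⟨h, _⟩
    · rw [h]; exact hg_le p
    · rw [h]
      have := hg_le (-p)
      rw [map_neg] at this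
      have hNp : N (-p) = N p := by simp [hN]
      linarith [this, hNp ▸ this]
  -- the component functionals
  set ga : Y →ₗ[ℝ] ℝ := g.comp (LinearMap.inl ℝ Y 𝒰) with hga
  set gb : 𝒰 →ₗ[ℝ] ℝ := g.comp (LinearMap.inr ℝ Y 𝒰) with hgb
  have hga_bd : ∀ ψ : Y, |ga ψ| ≤ δ * ‖z‖ * ‖ψ‖ := by
    intro ψ
    have := habs (ψ, 0)
    simpa [hN, hga] using this
  have hgb_bd : ∀ w : 𝒰, |gb w| ≤ C * ‖z‖ * ‖w‖ := by
    intro w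
    have := habs (0, w)
    simpa [hN, hgb] using this
  set gaC : Y →L[ℝ] ℝ := LinearMap.mkContinuous ga (δ * ‖z‖)
    (fun ψ => by simpa using hga_bd ψ) with hgaC
  set gbC : 𝒰 →L[ℝ] ℝ := LinearMap.mkContinuous gb (C * ‖z‖)
    (fun w => by simpa using hgb_bd w) with hgbC
  set v : Y := (InnerProductSpace.toDual ℝ Y).symm gaC with hv
  set u : 𝒰 := (InnerProductSpace.toDual ℝ 𝒰).symm gbC with hu
  have hvψ : ∀ ψ : Y, ⟪v, ψ⟫ = ga ψ := fun ψ => InnerProductSpace.toDual_symm_apply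
  have huw : ∀ w : 𝒰, ⟪u, w⟫ = gb w := fun w => InnerProductSpace.toDual_symm_apply
  have hvnorm : ‖v‖ ≤ δ * ‖z‖ := by
    rw [hv, LinearIsometryEquiv.norm_map]
    exact LinearMap.mkContinuous_norm_le _ (mul_nonneg hδ.1.le (norm_nonneg _)) _
  have hunorm : ‖u‖ ≤ C * ‖z‖ := by
    rw [hu, LinearIsometryEquiv.norm_map]
    exact LinearMap.mkContinuous_norm_le _ (mul_nonneg hC.le (norm_nonneg _)) _
  -- decomposition of ⟪z, φ0 ψ⟫
  have hdecomp : ∀ ψ : Y, ⟪z, φ0 ψ⟫ = ⟪v, ψ⟫ + ⟪u, W ψ⟫ := by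
    intro ψ
    have h1 : g (Φ ψ) = ⟪z, φ0 ψ⟫ := hg_eq ⟨Φ ψ, ⟨ψ, rfl⟩⟩
    have h2 : (Φ ψ : Y × 𝒰) = (ψ, 0) + (0, W ψ) := by
      simp [hΦ, Prod.ext_iff]
    rw [hvψ, huw]
    have : g (Φ ψ) = ga ψ + gb (W ψ) := by
      rw [h2, map_add]; rfl
    rw [← h1, this]
  refine ⟨-u, ?_, by simpa using hunorm⟩
  have hy : yEnd z (-u) = v := by
    apply ext_inner_right ℝ
    intro ψ
    have h := hdual z (-u) ψ
    have : ⟪yEnd z (-u), ψ⟫ = ⟪z, φ0 ψ⟫ + ⟪-u, W ψ⟫ := by linarith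
    rw [this, hdecomp ψ, inner_neg_left]
    ring
  rw [hy]
  exact hvnorm
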